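/- If d succeeds on a tail Y of X (where X = σY), then the translated martingale d_σ defined by d_σ(τ) = d(στ) succeeds on Y; moreover, given a positive martingale d, the function D(τ) = Σ_{σ∈2^{<ω}} 2^{-2|σ|-1} · d_σ(τ)/d_σ(ε) is a well-defined normed martingale that succeeds against every tail of any sequence on which d succeeds. -/

import Mathlib

open scoped ENNReal
open MeasureTheory Filter

def cyl (σ : List Bool) : Set (ℕ → Bool) :=
  {X | ∀ i : Fin σ.length, X i = σ.get i}

def opensOf (U : Set (List Bool)) : Set (ℕ → Bool) :=
  ⋃ σ ∈ U, cyl σ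

def PrefixFree (U : Set (List Bool)) : Prop :=
  ∀ σ ∈ U, ∀ τ ∈ U, σ <+: τ → σ = τ

def IsUniform (μ : Measure (ℕ → Bool)) : Prop :=
  ∀ σ : List Bool, μ (cyl σ) = (1 / 2 : ℝ≥0∞) ^ σ.length

def concatN (U : Set (List Bool)) (n : ℕ) : Set (List Bool) :=
  {σ | ∃ l : List (List Bool), l.length = n ∧ (∀ τ ∈ l, τ ∈ U) ∧ σ = l.flatten}

def seqTake (X : ℕ → Bool) (n : ℕ) : List Bool := List.ofFn fun i : Fin n => X i

def seqAppend (σ : List Bool) (Y : ℕ → Bool) : ℕ → Bool :=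
  fun n => if h : n < σ.length then σ.get ⟨n, h⟩ else Y (n - σ.length)

def prefixOfSeq (σ : List Bool) (X : ℕ → Bool) : Prop :=
  ∀ i : Fin σ.length, X i = σ.get i

def concatOmega (U : Set (List Bool)) : Set (ℕ → Bool) :=
  {X | ∃ f : ℕ → List Bool, (∀ i, f i ∈ U) ∧
    ∀ n : ℕ, prefixOfSeq (((List.range n).map f).flatten) X}

def IsMartingale (d : List Bool → ℝ) : Prop :=
  (∀ σ, 0 ≤ d σ) ∧ ∀ σ, d σ = (d (σ ++ [false]) + d (σ ++ [true])) / 2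

def Succeeds (d : List Bool → ℝ) (X : ℕ → Bool) : Prop :=
  ∀ C : ℝ, ∀ m : ℕ, ∃ n ≥ m, C ≤ d (seqTake X n)

def winningSet (d : List Bool → ℝ) (q : ℝ) : Set (List Bool) :=
  {σ | q ≤ d σ ∧ ∀ τ : List Bool, τ <+: σ → τ ≠ σ → d τ < q}

/- auxiliary lemmas -/

lemma seqTake_add (X : ℕ → Bool) (k n : ℕ) :
    seqTake X (k + n) = seqTake X k ++ seqTake (fun i => X (i + k)) n := by
  simp only [seqTake, List.ofFn_add]
  congr 1
  congr 1
  funext j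
  congr 1
  simp
  omega

lemma seqAppend_take (σ : List Bool) (Y : ℕ → Bool) :
    seqTake (seqAppend σ Y) σ.length = σ := by
  conv_rhs => rw [← List.ofFn_get σ]
  simp only [seqTake, seqAppend]
  congr 1
  funext i
  rw [dif_pos i.isLt]

lemma seqAppend_tail (σ : List Bool) (Y : ℕ → Bool) (i : ℕ) :
    seqAppend σ Y (i + σ.length) = Y i := by
  rw [seqAppend, dif_neg (by omega)]
  congr 1
  omega

lemma pow_arith (n : ℕ) : (2:ℝ) ^ n * (1 / 2 : ℝ) ^ (2 * n + 1) = (1 / 2 : ℝ) ^ (n + 1) := by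
  have h : 2 * n + 1 = n + (n + 1) := by ring
  rw [one_div, inv_pow, inv_pow, h, pow_add, mul_inv, ← mul_assoc,
    mul_inv_cancel₀ (by positivity)]
  simp

lemma d_double (d : List Bool → ℝ)
    (hd : ∀ σ, d σ = (d (σ ++ [false]) + d (σ ++ [true])) / 2)
    (hpos : ∀ σ, 0 < d σ) (σ : List Bool) (b : Bool) :
    d (σ ++ [b]) ≤ 2 * d σ := by
  have h := hd σ
  have h0 := (hpos (σ ++ [false])).le
  have h1 := (hpos (σ ++ [true])).le
  cases b <;> nlinarith

lemma d_bound (d : List Bool → ℝ)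
    (hd : ∀ σ, d σ = (d (σ ++ [false]) + d (σ ++ [true])) / 2)
    (hpos : ∀ σ, 0 < d σ) (σ τ : List Bool) :
    d (σ ++ τ) ≤ 2 ^ τ.length * d σ := by
  induction τ using List.reverseRecOn with
  | nil => simp
  | append_singleton τ b ih =>
    have h1 : d (σ ++ (τ ++ [b])) ≤ 2 * d (σ ++ τ) := by
      rw [← List.append_assoc]
      exact d_double d hd hpos _ b
    have h2 : (0:ℝ) < 2 ^ τ.length := by positivity
    calc d (σ ++ (τ ++ [b])) ≤ 2 * d (σ ++ τ) := h1
      _ ≤ 2 * (2 ^ τ.length * d σ) := by nlinarith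
      _ = 2 ^ (τ ++ [b]).length * d σ := by
          simp [List.length_append, pow_succ]; ring

lemma summable_aux (d : List Bool → ℝ)
    (hd : ∀ σ, d σ = (d (σ ++ [false]) + d (σ ++ [true])) / 2)
    (hpos : ∀ σ, 0 < d σ) (τ : List Bool) :
    Summable fun σ : List Bool =>
      (1 / 2 : ℝ) ^ (2 * σ.length + 1) * (d (σ ++ τ) / d σ) := by
  set F : List Bool → ℝ := fun σ => (1 / 2 : ℝ) ^ (2 * σ.length + 1) * (d (σ ++ τ) / d σ)
    with hF
  rw [← (List.equivSigmaTuple (α := Bool)).symm.summable_iff]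
  have heq : ∀ p : (n : ℕ) × (Fin n → Bool),
      (F ∘ (List.equivSigmaTuple (α := Bool)).symm) p
        = (1 / 2 : ℝ) ^ (2 * p.1 + 1) * (d (List.ofFn p.2 ++ τ) / d (List.ofFn p.2)) := by
    rintro ⟨n, f⟩
    simp [hF, List.equivSigmaTuple]
  rw [summable_sigma_of_nonneg (fun p => by
    rw [heq]; have := (hpos (List.ofFn p.2)).le
    have := (hpos (List.ofFn p.2 ++ τ)).le; positivity)]
  refine ⟨fun n => Summable.of_finite, ?_⟩
  apply Summable.of_nonneg_of_le (f := fun n : ℕ => (2:ℝ) ^ τ.length * (1/2) ^ (n+1))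
  · intro n
    exact tsum_nonneg fun f => by
      rw [heq]; have := (hpos (List.ofFn f)).le
      have := (hpos (List.ofFn f ++ τ)).le; positivity
  · intro n
    rw [tsum_fintype]
    have hbound : ∀ f : Fin n → Bool,
        (F ∘ (List.equivSigmaTuple (α := Bool)).symm) ⟨n, f⟩
          ≤ (1/2:ℝ) ^ (2*n+1) * 2 ^ τ.length := by
      intro f
      rw [heq]
      have hp := hpos (List.ofFn f)
      have hdiv : d (List.ofFn f ++ τ) / d (List.ofFn f) ≤ 2 ^ τ.length := by
        rw [div_le_iff₀ hp]
        exact d_bound d hd hpos (List.ofFn f) τ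
      exact mul_le_mul_of_nonneg_left hdiv (by positivity)
    calc ∑ f : Fin n → Bool, (F ∘ (List.equivSigmaTuple (α := Bool)).symm) ⟨n, f⟩
        ≤ ∑ _f : Fin n → Bool, (1/2:ℝ) ^ (2*n+1) * 2 ^ τ.length :=
          Finset.sum_le_sum fun f _ => hbound f
      _ = (2:ℝ) ^ n * ((1/2:ℝ) ^ (2*n+1) * 2 ^ τ.length) := by
          rw [Finset.sum_const, Finset.card_univ]
          simp [nsmul_eq_mul]
      _ = (2:ℝ) ^ τ.length * (1/2) ^ (n+1) := by
          rw [← mul_assoc, pow_arith]; ring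
  · apply Summable.mul_left
    have hgeo : Summable fun n : ℕ => (1/2:ℝ) ^ n :=
      summable_geometric_of_lt_one (by norm_num) (by norm_num)
    exact (hgeo.mul_right (1/2)).congr fun n => (pow_succ _ _).symm

theorem stmt9 (d : List Bool → ℝ)
    (hd : ∀ σ, d σ = (d (σ ++ [false]) + d (σ ++ [true])) / 2)
    (hpos : ∀ σ, 0 < d σ) :
    (∀ (σ : List Bool) (Y : ℕ → Bool),
        Succeeds d (seqAppend σ Y) → Succeeds (fun τ => d (σ ++ τ)) Y)
    ∧ ∀ D : List Bool → ℝ,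
        (∀ τ, D τ = ∑' σ : List Bool, (1 / 2 : ℝ) ^ (2 * σ.length + 1) * (d (σ ++ τ) / d σ)) →
        (∀ τ, Summable fun σ : List Bool =>
            (1 / 2 : ℝ) ^ (2 * σ.length + 1) * (d (σ ++ τ) / d σ))
        ∧ D [] = 1
        ∧ IsMartingale D
        ∧ ∀ X : ℕ → Bool, Succeeds d X → ∀ k : ℕ, Succeeds D (fun n => X (n + k)) := by
  have hsum := summable_aux d hd hpos
  have hterm_nn : ∀ τ σ : List Bool,
      0 ≤ (1 / 2 : ℝ) ^ (2 * σ.length + 1) * (d (σ ++ τ) / d σ) := by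
    intro τ σ
    have := (hpos σ).le; have := (hpos (σ ++ τ)).le; positivity
  constructor
  · intro σ Y h C m
    obtain ⟨n, hn, hC⟩ := h C (σ.length + m)
    refine ⟨n - σ.length, by omega, ?_⟩
    have hn' : n = σ.length + (n - σ.length) := by omega
    rw [hn', seqTake_add, seqAppend_take] at hC
    have hY : (fun i => seqAppend σ Y (i + σ.length)) = Y := by
      funext i; exact seqAppend_tail σ Y i
    rw [hY] at hC
    exact hC
  · intro D hD
    refine ⟨hsum, ?_, ⟨?_, ?_⟩, ?_⟩
    · -- D [] = 1
      have h1 : ∀ σ : List Bool,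
          (1 / 2 : ℝ) ^ (2 * σ.length + 1) * (d (σ ++ []) / d σ)
            = (1 / 2 : ℝ) ^ (2 * σ.length + 1) := by
        intro σ; rw [List.append_nil, div_self (hpos σ).ne', mul_one]
      have hlenp : ∀ p : (n : ℕ) × (Fin n → Bool),
          ((List.equivSigmaTuple (α := Bool)).symm p).length = p.1 := by
        rintro ⟨n, f⟩; simp [List.equivSigmaTuple]
      have hsL : Summable fun σ : List Bool => (1/2:ℝ) ^ (2 * σ.length + 1) :=
        (hsum []).congr h1
      have hs : Summable fun p : (n : ℕ) × (Fin n → Bool) => (1/2:ℝ) ^ (2 * p.1 + 1) := by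
        have := ((List.equivSigmaTuple (α := Bool)).symm.summable_iff
          (f := fun σ : List Bool => (1/2:ℝ) ^ (2 * σ.length + 1))).mpr hsL
        exact this.congr fun p => by rw [Function.comp_apply, hlenp p]
      rw [hD, tsum_congr h1, ← Equiv.tsum_eq (List.equivSigmaTuple (α := Bool)).symm]
      rw [tsum_congr (fun p => by rw [hlenp p] :
        ∀ p : (n : ℕ) × (Fin n → Bool),
          (1/2:ℝ) ^ (2 * ((List.equivSigmaTuple (α := Bool)).symm p).length + 1)
            = (1/2:ℝ) ^ (2 * p.1 + 1))]
      rw [Summable.tsum_sigma hs]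
      have hfib : ∀ n : ℕ, (∑' _f : Fin n → Bool, (1/2:ℝ) ^ (2 * n + 1)) = (1/2:ℝ) ^ (n+1) := by
        intro n
        rw [tsum_fintype, Finset.sum_const, Finset.card_univ]
        have : (Fintype.card (Fin n → Bool)) = 2 ^ n := by simp
        rw [this, nsmul_eq_mul]
        push_cast
        rw [pow_arith]
      rw [tsum_congr hfib]
      calc ∑' n : ℕ, (1/2:ℝ) ^ (n+1)
          = ∑' n : ℕ, (1/2:ℝ) ^ n * (1/2) := tsum_congr fun n => pow_succ _ _
        _ = (1 - 1/2:ℝ)⁻¹ * (1/2) := by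
            rw [tsum_mul_right, tsum_geometric_of_lt_one (by norm_num) (by norm_num)]
        _ = 1 := by norm_num
    · -- nonneg
      intro σ
      rw [hD]
      exact tsum_nonneg (hterm_nn σ)
    · -- martingale equation
      intro τ
      have key : ∀ σ : List Bool,
          (1 / 2 : ℝ) ^ (2 * σ.length + 1) * (d (σ ++ (τ ++ [false])) / d σ)
            + (1 / 2 : ℝ) ^ (2 * σ.length + 1) * (d (σ ++ (τ ++ [true])) / d σ)
          = 2 * ((1 / 2 : ℝ) ^ (2 * σ.length + 1) * (d (σ ++ τ) / d σ)) := by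
        intro σ
        have h2 : d (σ ++ (τ ++ [false])) + d (σ ++ (τ ++ [true])) = 2 * d (σ ++ τ) := by
          rw [← List.append_assoc, ← List.append_assoc, hd (σ ++ τ)]; ring
        rw [← mul_add, ← add_div, h2]
        ring
      rw [hD, hD (τ ++ [false]), hD (τ ++ [true]), ← Summable.tsum_add (hsum _) (hsum _),
        tsum_congr key, tsum_mul_left]
      ring
    · -- success
      intro X hX k C m
      set σ₀ : List Bool := seqTake X k with hσ₀
      have hlen : σ₀.length = k := by simp [hσ₀, seqTake]
      obtain ⟨n, hn, hC⟩ := hX (C * d σ₀ * 2 ^ (2 * k + 1)) (k + m)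
      refine ⟨n - k, by omega, ?_⟩
      have hn' : n = k + (n - k) := by omega
      have hsplit : seqTake X n = σ₀ ++ seqTake (fun i => X (i + k)) (n - k) := by
        conv_lhs => rw [hn']
        rw [seqTake_add]
      rw [hD]
      refine le_trans ?_ (Summable.le_tsum (hsum (seqTake (fun i => X (i + k)) (n - k))) σ₀
        (fun σ _ => hterm_nn _ σ))
      rw [hlen, ← hsplit]
      have hp := hpos σ₀
      have h2 : (0:ℝ) < 2 ^ (2 * k + 1) := by positivity
      have hmid : C * d σ₀ ≤ d (seqTake X n) * (1/2:ℝ) ^ (2 * k + 1) := by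
        rw [one_div, inv_pow, ← div_eq_mul_inv, le_div_iff₀ h2]
        exact hC
      rw [← mul_div_assoc, le_div_iff₀ hp]
      linarith
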